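/- The closed unit ball of ℓ_2 (viewed as a subset of ℓ_2* = ℓ_2) is a uniformly 1-convergent set, but not a uniformly 2-convergent set. -/

import Mathlib

open Filter Topology Metric Bornology ENNReal

noncomputable section

universe u v w

variable {X : Type*} {Y : Type*} {Z : Type*}

section Defs
variable [NormedAddCommGroup X] [NormedSpace ℝ X]
variable [NormedAddCommGroup Y] [NormedSpace ℝ Y]

/-- A sequence is weakly `p`-summable if `(x*(xₙ))ₙ ∈ ℓ_p` for every functional `x*`;
for `p = ∞` we use weakly null sequences. -/
def WeaklyPSummable (p : ℝ≥0∞) (x : ℕ → X) : Prop :=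
  if p = ⊤ then ∀ f : X →L[ℝ] ℝ, Tendsto (fun n => f (x n)) atTop (𝓝 0)
  else ∀ f : X →L[ℝ] ℝ, Memℓp (fun n => f (x n)) p

/-- A set of operators is uniformly `p`-convergent if every weakly `p`-summable
sequence converges to `0` uniformly on the set. -/
def UnifPConvergent (p : ℝ≥0∞) (K : Set (X →L[ℝ] Y)) : Prop :=
  ∀ x : ℕ → X, WeaklyPSummable p x →
    ∀ ε > (0 : ℝ), ∃ N : ℕ, ∀ n ≥ N, ∀ T ∈ K, ‖T (x n)‖ < ε

/-- A `p`-convergent operator maps weakly `p`-summable sequences to norm-null sequences. -/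
def PConvergentOp (p : ℝ≥0∞) (T : X →L[ℝ] Y) : Prop :=
  ∀ x : ℕ → X, WeaklyPSummable p x → Tendsto (fun n => ‖T (x n)‖) atTop (𝓝 0)

/-- A sequence is weakly `p`-Cauchy if all differences along pairs of increasing
index sequences are weakly `p`-summable. -/
def WeaklyPCauchy (p : ℝ≥0∞) (x : ℕ → X) : Prop :=
  ∀ m k : ℕ → ℕ, StrictMono m → StrictMono k →
    WeaklyPSummable p (fun n => x (m n) - x (k n))

/-- A set is weakly `p`-precompact if every sequence in it has a weakly `p`-Cauchy
subsequence. -/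
def WeaklyPPrecompact (p : ℝ≥0∞) (A : Set X) : Prop :=
  ∀ x : ℕ → X, (∀ n, x n ∈ A) →
    ∃ s : ℕ → ℕ, StrictMono s ∧ WeaklyPCauchy p (fun n => x (s n))

/-- `B` is `U`-bounded: bounded and with positive distance to the boundary of `U`. -/
def UBounded (U B : Set X) : Prop :=
  IsBounded B ∧ B ⊆ U ∧ ∃ d > (0 : ℝ), ∀ x ∈ B, ball x d ⊆ U

/-- A set of operators is equicompact if every bounded sequence has a subsequence on
which the operators converge in norm, uniformly on the set. -/
def Equicompact (M : Set (X →L[ℝ] Y)) : Prop :=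
  ∀ x : ℕ → X, IsBounded (Set.range x) →
    ∃ s : ℕ → ℕ, StrictMono s ∧ ∃ g : (X →L[ℝ] Y) → Y,
      TendstoUniformlyOn (fun n T => T (x (s n))) g atTop M

/-- A set of operators is weakly equicompact if every bounded sequence has a
subsequence on which the operators converge weakly, uniformly on the set. -/
def WeaklyEquicompact (M : Set (X →L[ℝ] Y)) : Prop :=
  ∀ x : ℕ → X, IsBounded (Set.range x) →
    ∃ s : ℕ → ℕ, StrictMono s ∧ ∀ φ : Y →L[ℝ] ℝ, ∃ c : (X →L[ℝ] Y) → ℝ,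
      TendstoUniformlyOn (fun n T => φ (T (x (s n)))) c atTop M

/-- A weakly compact operator: the image of every bounded sequence has a weakly
convergent subsequence. -/
def WeaklyCompactOp (T : X →L[ℝ] Y) : Prop :=
  ∀ x : ℕ → X, IsBounded (Set.range x) →
    ∃ s : ℕ → ℕ, StrictMono s ∧ ∃ y : Y,
      ∀ φ : Y →L[ℝ] ℝ, Tendsto (fun n => φ (T (x (s n)))) atTop (𝓝 (φ y))

/-- A space has the `p`-Schur property if weakly `p`-summable sequences are norm null. -/
def PSchur (p : ℝ≥0∞) (W : Type*) [NormedAddCommGroup W] [NormedSpace ℝ W] : Prop :=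
  ∀ x : ℕ → W, WeaklyPSummable p x → Tendsto (fun n => ‖x n‖) atTop (𝓝 0)

/-- A set is relatively weakly `p`-compact if every sequence in it has a subsequence
weakly `p`-convergent to a point of the space. -/
def RelWeaklyPCompact (p : ℝ≥0∞) (A : Set X) : Prop :=
  ∀ x : ℕ → X, (∀ n, x n ∈ A) →
    ∃ s : ℕ → ℕ, StrictMono s ∧ ∃ a : X, WeaklyPSummable p (fun n => x (s n) - a)

/-- `f` is weakly `p`-sequentially continuous on `U` if it maps `U`-bounded weakly
`p`-Cauchy sequences to norm convergent sequences. -/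
def WeaklyPSeqContinuous (p : ℝ≥0∞) (U : Set X) (f : X → Y) : Prop :=
  ∀ x : ℕ → X, (∀ n, x n ∈ U) → UBounded U (Set.range x) → WeaklyPCauchy p x →
    ∃ y : Y, Tendsto (fun n => f (x n)) atTop (𝓝 y)

end Defs
instance fact_one_le_one' : Fact ((1 : ℝ≥0∞) ≤ 1) := ⟨le_refl _⟩
instance fact_one_le_two' : Fact ((1 : ℝ≥0∞) ≤ 2) := ⟨by norm_num⟩


set_option maxHeartbeats 1000000 in
/-- `ℓ₂` has the 1-Schur property: weakly 1-summable sequences are norm-null. -/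
theorem l2_one_schur_aux (x : ℕ → lp (fun _ : ℕ => ℝ) 2)
    (hx : ∀ f : lp (fun _ : ℕ => ℝ) 2 →L[ℝ] ℝ, Summable fun n => |f (x n)|) :
    Tendsto (fun n => ‖x n‖) atTop (𝓝 0) := by
  -- greedy signed partial sums
  let y : ℕ → lp (fun _ : ℕ => ℝ) 2 := fun N => Nat.rec 0
    (fun n yn => yn + (if 0 ≤ (inner ℝ yn (x n) : ℝ) then x n else -x n)) N
  have hyrec : ∀ N, y (N + 1) =
      y N + (if 0 ≤ (inner ℝ (y N) (x N) : ℝ) then x N else -x N) := fun N => rfl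
  -- lower bound on the norm of the signed sums
  have key : ∀ N, ∑ n ∈ Finset.range N, ‖x n‖ ^ 2 ≤ ‖y N‖ ^ 2 := by
    intro N
    induction N with
    | zero => simp
    | succ N ih =>
      rw [Finset.sum_range_succ, hyrec]
      set z := if 0 ≤ (inner ℝ (y N) (x N) : ℝ) then x N else -x N with hz
      have hinner : 0 ≤ (inner ℝ (y N) z : ℝ) := by
        rw [hz]; split_ifs with h
        · exact h
        · rw [inner_neg_right]; linarith
      have hnz : ‖z‖ = ‖x N‖ := by
        rw [hz]; split_ifs <;> simp
      have := norm_add_sq_real (y N) z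
      rw [this, hnz]
      linarith
  -- upper bound on `f (y N)`
  have upper : ∀ (f : lp (fun _ : ℕ => ℝ) 2 →L[ℝ] ℝ) (N : ℕ),
      |f (y N)| ≤ ∑ n ∈ Finset.range N, |f (x n)| := by
    intro f N
    induction N with
    | zero => simp [show y 0 = 0 from rfl]
    | succ N ih =>
      rw [Finset.sum_range_succ, hyrec, map_add]
      have : |f (if 0 ≤ (inner ℝ (y N) (x N) : ℝ) then x N else -x N)| = |f (x N)| := by
        split_ifs <;> simp
      calc |f (y N) + f _| ≤ |f (y N)| + |f _| := abs_add_le _ _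
        _ ≤ _ := by rw [this]; exact add_le_add ih le_rfl
  -- Banach–Steinhaus on the dual space
  let g : ℕ → (lp (fun _ : ℕ => ℝ) 2 →L[ℝ] ℝ) →L[ℝ] ℝ :=
    fun N => ContinuousLinearMap.apply ℝ ℝ (y N)
  obtain ⟨C, hC⟩ := banach_steinhaus (g := g) (fun f =>
    ⟨∑' n, |f (x n)|, fun N => by
      simpa [g, Real.norm_eq_abs] using
        le_trans (upper f N) (Summable.sum_le_tsum (Finset.range N) (fun n _ => abs_nonneg _) (hx f))⟩)
  have hC0 : 0 ≤ C := le_trans (norm_nonneg (g 0)) (hC 0)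
  have hyC : ∀ N, ‖y N‖ ≤ C := by
    intro N
    have h1 : ‖y N‖ ^ 2 = g N (innerSL ℝ (y N)) := by
      simp [g, real_inner_self_eq_norm_sq]
    have h2 : |g N (innerSL ℝ (y N))| ≤ C * ‖y N‖ := by
      calc |g N (innerSL ℝ (y N))| ≤ ‖g N‖ * ‖innerSL ℝ (y N)‖ := (g N).le_opNorm _
        _ ≤ C * ‖y N‖ := by
            rw [innerSL_apply_norm]
            exact mul_le_mul_of_nonneg_right (hC N) (norm_nonneg _)
    have h3 : ‖y N‖ ^ 2 ≤ C * ‖y N‖ := h1 ▸ le_trans (le_abs_self _) h2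
    by_contra hcon
    push_neg at hcon
    nlinarith [norm_nonneg (y N)]
  have hsum : Summable fun n => ‖x n‖ ^ 2 := by
    apply summable_of_sum_range_le (c := C ^ 2) (fun n => sq_nonneg _)
    intro N
    exact le_trans (key N) (pow_le_pow_left₀ (norm_nonneg _) (hyC N) 2)
  have hsq := hsum.tendsto_atTop_zero
  have : Tendsto (fun n => Real.sqrt (‖x n‖ ^ 2)) atTop (𝓝 (Real.sqrt 0)) :=
    (Real.continuous_sqrt.tendsto 0).comp hsq
  simpa [Real.sqrt_sq (norm_nonneg _)] using this

/-- The closed unit ball of `ℓ₂* = ℓ₂` is uniformly `1`-convergent but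
not uniformly `2`-convergent. -/
theorem stmt6 :
    UnifPConvergent 1 (closedBall (0 : lp (fun _ : ℕ => ℝ) 2 →L[ℝ] ℝ) 1) ∧
    ¬ UnifPConvergent 2 (closedBall (0 : lp (fun _ : ℕ => ℝ) 2 →L[ℝ] ℝ) 1) := by
  constructor
  · -- uniformly 1-convergent
    intro x hx ε hε
    rw [WeaklyPSummable, if_neg ENNReal.one_ne_top] at hx
    have hsum : ∀ f : lp (fun _ : ℕ => ℝ) 2 →L[ℝ] ℝ, Summable fun n => |f (x n)| := by
      intro f
      have h1 := (memℓp_gen_iff (p := 1) (by norm_num)).1 (hx f)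
      simpa [Real.rpow_one, Real.norm_eq_abs] using h1
    have := (l2_one_schur_aux x hsum).eventually (gt_mem_nhds hε)
    obtain ⟨N, hN⟩ := eventually_atTop.1 this
    refine ⟨N, fun n hn T hT => ?_⟩
    have hT1 : ‖T‖ ≤ 1 := mem_closedBall_zero_iff.1 hT
    calc ‖T (x n)‖ ≤ ‖T‖ * ‖x n‖ := T.le_opNorm _
      _ ≤ 1 * ‖x n‖ := mul_le_mul_of_nonneg_right hT1 (norm_nonneg _)
      _ = ‖x n‖ := one_mul _
      _ < ε := hN n hn
  · -- not uniformly 2-convergent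
    intro h
    set x : ℕ → lp (fun _ : ℕ => ℝ) 2 := fun n => lp.single 2 n (1 : ℝ) with hxdef
    have hx : WeaklyPSummable 2 x := by
      rw [WeaklyPSummable, if_neg ENNReal.ofNat_ne_top]
      intro f
      set y := (InnerProductSpace.toDual ℝ (lp (fun _ : ℕ => ℝ) 2)).symm f with hy
      have hf : ∀ n, f (x n) = y n := by
        intro n
        rw [← InnerProductSpace.toDual_symm_apply, ← hy, hxdef]
        simp [lp.inner_single_right, RCLike.inner_apply]
      have heq : (fun n => f (x n)) = ⇑y := funext hf
      rw [heq]
      exact lp.memℓp y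
    obtain ⟨N, hN⟩ := h x hx (1/2) (by norm_num)
    have h1 : ‖x N‖ = 1 := by
      exact (lp.norm_single (E := fun _ : ℕ => ℝ) (p := 2) (by norm_num) N (1 : ℝ)).trans (by norm_num)
    have hT : innerSL ℝ (x N) ∈ closedBall (0 : lp (fun _ : ℕ => ℝ) 2 →L[ℝ] ℝ) 1 :=
      mem_closedBall_zero_iff.2 (by rw [innerSL_apply_norm, h1])
    have hlt := hN N le_rfl _ hT
    have hval : (innerSL ℝ (x N)) (x N) = 1 := by
      have h2 : (innerSL ℝ (x N)) (x N) = (inner ℝ (x N) (x N) : ℝ) := rfl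
      rw [h2, real_inner_self_eq_norm_sq, h1]; norm_num
    rw [hval] at hlt
    norm_num at hlt
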